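/- If a sub-hypercube h is closed by f (a trap space) and x ∈ c(h), then for every y with x →_MP y we have y ∈ c(h): trap spaces are invariant under MP transitions. -/
import Mathlib


/-- Vertex set of a sub-hypercube `h ∈ {0,1,*}^n`, encoded as `Fin n → Option Bool`
(`none` = free component `*`). -/
def verts {n : ℕ} (h : Fin n → Option Bool) : Set (Fin n → Bool) :=
  {x | ∀ i b, h i = some b → x i = b}

/-- `h` is `K`-closed by the Boolean network `f`. -/
def KClosed {n : ℕ} (f : (Fin n → Bool) → Fin n → Bool) (K : Set (Fin n))
    (h : Fin n → Option Bool) : Prop :=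
  ∀ x ∈ verts h, ∀ i ∈ K, ∀ b, h i = some b → f x i = b

/-- `h` is the smallest `K`-closed sub-hypercube containing `x`. -/
def SmallestClosed {n : ℕ} (f : (Fin n → Bool) → Fin n → Bool) (K : Set (Fin n))
    (x : Fin n → Bool) (h : Fin n → Option Bool) : Prop :=
  KClosed f K h ∧ x ∈ verts h ∧
    ∀ h', KClosed f K h' → x ∈ verts h' → verts h ⊆ verts h'

/-- Most Permissive transition `x →_MP y`. -/
def MPTrans {n : ℕ} (f : (Fin n → Bool) → Fin n → Bool) (x y : Fin n → Bool) : Prop :=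
  ∃ (K : Set (Fin n)) (h : Fin n → Option Bool), SmallestClosed f K x h ∧
    y ∈ verts h ∧ ∀ i ∈ K, ∃ z ∈ verts h, y i = f z i

/-- Trap spaces (sub-hypercubes closed by `f`) are invariant under MP transitions. -/
theorem stmt_13 {n : ℕ} (f : (Fin n → Bool) → Fin n → Bool) (h : Fin n → Option Bool)
    (hcl : ∀ x ∈ verts h, f x ∈ verts h) (x y : Fin n → Bool)
    (hx : x ∈ verts h) (hxy : MPTrans f x y) : y ∈ verts h := by
  obtain ⟨K, h', ⟨hKc, hxh', hmin⟩, hyh', _⟩ := hxy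
  exact hmin h (fun z hz i _ b hb => hcl z hz i b hb) hx hyh'
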